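/- In the three-concept DGP with TopK=2, with L(θ) = E_p|S △ Ŝ_θ(S)|, the monosemantic code θ_M^{jk} has strictly larger loss than the feature-splitting code θ_S^{ij,j} (one atom writing v_i + v_j active iff {i,j} ⊆ S, one atom writing v_j active iff j ∈ S and i ∉ S) if and only if p_{ij} > p_k + p_{ik} + p_{jk}. -/
import Mathlib

lemma sum_finset_fin3 (g : Finset (Fin 3) → ℝ) :
    ∑ S : Finset (Fin 3), g S =
      g ∅ + g {0} + g {1} + g {0,1} + g {2} + g {0,2} + g {1,2} + g {0,1,2} := by
  have : (Finset.univ : Finset (Finset (Fin 3))) =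
      {∅, {0}, {1}, {0,1}, {2}, {0,2}, {1,2}, {0,1,2}} := by decide
  rw [this]
  rw [show ({∅, {0}, {1}, {0,1}, {2}, {0,2}, {1,2}, {0,1,2}} : Finset (Finset (Fin 3)))
    = insert ∅ (insert {0} (insert {1} (insert {0,1} (insert {2} (insert {0,2}
      (insert {1,2} {({0,1,2} : Finset (Fin 3))})))))) from rfl]
  repeat rw [Finset.sum_insert (by decide)]
  rw [Finset.sum_singleton]; ring



/-- Expected symmetric-difference loss of a code `f` under pmf `p` on subsets of
`{1,2,3}`; by orthonormality of concepts this equals the mean squared error. -/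
def symmLoss (p : Finset (Fin 3) → ℝ) (f : Finset (Fin 3) → Finset (Fin 3)) : ℝ :=
  ∑ S : Finset (Fin 3), p S * (((S \ f S) ∪ (f S \ S)).card : ℝ)

/-- in the three-concept DGP with TopK = 2, the monosemantic code
`θ_M^{jk}` (reconstructing `S ∩ {j,k}`) has strictly larger loss than the
feature-splitting code `θ_S^{ij,j}` (reconstructing `{i,j}` when `{i,j} ⊆ S`,
`{j}` when `j ∈ S` and `i ∉ S`, and `∅` otherwise) iff
`p_{ij} > p_k + p_{ik} + p_{jk}`. -/
theorem splitting_condition_K2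
    (p : Finset (Fin 3) → ℝ) (hp0 : ∀ S, 0 ≤ p S)
    (hp1 : ∑ S : Finset (Fin 3), p S = 1)
    (i j k : Fin 3) (hij : i ≠ j) (hik : i ≠ k) (hjk : j ≠ k) :
    symmLoss p (fun S => S ∩ ({j, k} : Finset (Fin 3))) -
      symmLoss p (fun S =>
        if ({i, j} : Finset (Fin 3)) ⊆ S then ({i, j} : Finset (Fin 3))
        else if j ∈ S then ({j} : Finset (Fin 3)) else ∅) > 0 ↔
    p {i, j} > p {k} + p {i, k} + p {j, k} := by
  have h3 : ∀ x : Fin 3, x = 0 ∨ x = 1 ∨ x = 2 := by decide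
  rcases h3 i with rfl|rfl|rfl <;> rcases h3 j with rfl|rfl|rfl <;>
    rcases h3 k with rfl|rfl|rfl <;>
    first
    | exact absurd rfl hij
    | exact absurd rfl hik
    | exact absurd rfl hjk
    | skip
  · have hM : symmLoss p (fun S => S ∩ ({1, 2} : Finset (Fin 3))) =
        p ∅ * ((0:ℕ):ℝ) + p {0} * ((1:ℕ):ℝ) + p {1} * ((0:ℕ):ℝ) + p {0, 1} * ((1:ℕ):ℝ) + p {2} * ((0:ℕ):ℝ) + p {0, 2} * ((1:ℕ):ℝ) + p {1, 2} * ((0:ℕ):ℝ) + p {0, 1, 2} * ((1:ℕ):ℝ) := by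
      rw [symmLoss, sum_finset_fin3]; rfl
    have hS : symmLoss p (fun S =>
        if ({0, 1} : Finset (Fin 3)) ⊆ S then ({0, 1} : Finset (Fin 3))
        else if (1:Fin 3) ∈ S then ({1} : Finset (Fin 3)) else ∅) =
        p ∅ * ((0:ℕ):ℝ) + p {0} * ((1:ℕ):ℝ) + p {1} * ((0:ℕ):ℝ) + p {0, 1} * ((0:ℕ):ℝ) + p {2} * ((1:ℕ):ℝ) + p {0, 2} * ((2:ℕ):ℝ) + p {1, 2} * ((1:ℕ):ℝ) + p {0, 1, 2} * ((1:ℕ):ℝ) := by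
      rw [symmLoss, sum_finset_fin3]; rfl
    rw [hM, hS]
    push_cast; constructor <;> intro h <;> linarith
  · have hM : symmLoss p (fun S => S ∩ ({2, 1} : Finset (Fin 3))) =
        p ∅ * ((0:ℕ):ℝ) + p {0} * ((1:ℕ):ℝ) + p {1} * ((0:ℕ):ℝ) + p {0, 1} * ((1:ℕ):ℝ) + p {2} * ((0:ℕ):ℝ) + p {0, 2} * ((1:ℕ):ℝ) + p {1, 2} * ((0:ℕ):ℝ) + p {0, 1, 2} * ((1:ℕ):ℝ) := by
      rw [symmLoss, sum_finset_fin3]; rfl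
    have hS : symmLoss p (fun S =>
        if ({0, 2} : Finset (Fin 3)) ⊆ S then ({0, 2} : Finset (Fin 3))
        else if (2:Fin 3) ∈ S then ({2} : Finset (Fin 3)) else ∅) =
        p ∅ * ((0:ℕ):ℝ) + p {0} * ((1:ℕ):ℝ) + p {1} * ((1:ℕ):ℝ) + p {0, 1} * ((2:ℕ):ℝ) + p {2} * ((0:ℕ):ℝ) + p {0, 2} * ((0:ℕ):ℝ) + p {1, 2} * ((1:ℕ):ℝ) + p {0, 1, 2} * ((1:ℕ):ℝ) := by
      rw [symmLoss, sum_finset_fin3]; rfl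
    rw [hM, hS]
    simp only [show ({2, 1}:Finset (Fin 3)) = {1, 2} by decide]
    push_cast; constructor <;> intro h <;> linarith
  · have hM : symmLoss p (fun S => S ∩ ({0, 2} : Finset (Fin 3))) =
        p ∅ * ((0:ℕ):ℝ) + p {0} * ((0:ℕ):ℝ) + p {1} * ((1:ℕ):ℝ) + p {0, 1} * ((1:ℕ):ℝ) + p {2} * ((0:ℕ):ℝ) + p {0, 2} * ((0:ℕ):ℝ) + p {1, 2} * ((1:ℕ):ℝ) + p {0, 1, 2} * ((1:ℕ):ℝ) := by
      rw [symmLoss, sum_finset_fin3]; rfl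
    have hS : symmLoss p (fun S =>
        if ({1, 0} : Finset (Fin 3)) ⊆ S then ({1, 0} : Finset (Fin 3))
        else if (0:Fin 3) ∈ S then ({0} : Finset (Fin 3)) else ∅) =
        p ∅ * ((0:ℕ):ℝ) + p {0} * ((0:ℕ):ℝ) + p {1} * ((1:ℕ):ℝ) + p {0, 1} * ((0:ℕ):ℝ) + p {2} * ((1:ℕ):ℝ) + p {0, 2} * ((1:ℕ):ℝ) + p {1, 2} * ((2:ℕ):ℝ) + p {0, 1, 2} * ((1:ℕ):ℝ) := by
      rw [symmLoss, sum_finset_fin3]; rfl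
    rw [hM, hS]
    simp only [show ({1, 0}:Finset (Fin 3)) = {0, 1} by decide]
    push_cast; constructor <;> intro h <;> linarith
  · have hM : symmLoss p (fun S => S ∩ ({2, 0} : Finset (Fin 3))) =
        p ∅ * ((0:ℕ):ℝ) + p {0} * ((0:ℕ):ℝ) + p {1} * ((1:ℕ):ℝ) + p {0, 1} * ((1:ℕ):ℝ) + p {2} * ((0:ℕ):ℝ) + p {0, 2} * ((0:ℕ):ℝ) + p {1, 2} * ((1:ℕ):ℝ) + p {0, 1, 2} * ((1:ℕ):ℝ) := by
      rw [symmLoss, sum_finset_fin3]; rfl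
    have hS : symmLoss p (fun S =>
        if ({1, 2} : Finset (Fin 3)) ⊆ S then ({1, 2} : Finset (Fin 3))
        else if (2:Fin 3) ∈ S then ({2} : Finset (Fin 3)) else ∅) =
        p ∅ * ((0:ℕ):ℝ) + p {0} * ((1:ℕ):ℝ) + p {1} * ((1:ℕ):ℝ) + p {0, 1} * ((2:ℕ):ℝ) + p {2} * ((0:ℕ):ℝ) + p {0, 2} * ((1:ℕ):ℝ) + p {1, 2} * ((0:ℕ):ℝ) + p {0, 1, 2} * ((1:ℕ):ℝ) := by
      rw [symmLoss, sum_finset_fin3]; rfl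
    rw [hM, hS]
    simp only [show ({1, 0}:Finset (Fin 3)) = {0, 1} by decide, show ({2, 0}:Finset (Fin 3)) = {0, 2} by decide]
    push_cast; constructor <;> intro h <;> linarith
  · have hM : symmLoss p (fun S => S ∩ ({0, 1} : Finset (Fin 3))) =
        p ∅ * ((0:ℕ):ℝ) + p {0} * ((0:ℕ):ℝ) + p {1} * ((0:ℕ):ℝ) + p {0, 1} * ((0:ℕ):ℝ) + p {2} * ((1:ℕ):ℝ) + p {0, 2} * ((1:ℕ):ℝ) + p {1, 2} * ((1:ℕ):ℝ) + p {0, 1, 2} * ((1:ℕ):ℝ) := by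
      rw [symmLoss, sum_finset_fin3]; rfl
    have hS : symmLoss p (fun S =>
        if ({2, 0} : Finset (Fin 3)) ⊆ S then ({2, 0} : Finset (Fin 3))
        else if (0:Fin 3) ∈ S then ({0} : Finset (Fin 3)) else ∅) =
        p ∅ * ((0:ℕ):ℝ) + p {0} * ((0:ℕ):ℝ) + p {1} * ((1:ℕ):ℝ) + p {0, 1} * ((1:ℕ):ℝ) + p {2} * ((1:ℕ):ℝ) + p {0, 2} * ((0:ℕ):ℝ) + p {1, 2} * ((2:ℕ):ℝ) + p {0, 1, 2} * ((1:ℕ):ℝ) := by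
      rw [symmLoss, sum_finset_fin3]; rfl
    rw [hM, hS]
    simp only [show ({2, 0}:Finset (Fin 3)) = {0, 2} by decide, show ({2, 1}:Finset (Fin 3)) = {1, 2} by decide]
    push_cast; constructor <;> intro h <;> linarith
  · have hM : symmLoss p (fun S => S ∩ ({1, 0} : Finset (Fin 3))) =
        p ∅ * ((0:ℕ):ℝ) + p {0} * ((0:ℕ):ℝ) + p {1} * ((0:ℕ):ℝ) + p {0, 1} * ((0:ℕ):ℝ) + p {2} * ((1:ℕ):ℝ) + p {0, 2} * ((1:ℕ):ℝ) + p {1, 2} * ((1:ℕ):ℝ) + p {0, 1, 2} * ((1:ℕ):ℝ) := by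
      rw [symmLoss, sum_finset_fin3]; rfl
    have hS : symmLoss p (fun S =>
        if ({2, 1} : Finset (Fin 3)) ⊆ S then ({2, 1} : Finset (Fin 3))
        else if (1:Fin 3) ∈ S then ({1} : Finset (Fin 3)) else ∅) =
        p ∅ * ((0:ℕ):ℝ) + p {0} * ((1:ℕ):ℝ) + p {1} * ((0:ℕ):ℝ) + p {0, 1} * ((1:ℕ):ℝ) + p {2} * ((1:ℕ):ℝ) + p {0, 2} * ((2:ℕ):ℝ) + p {1, 2} * ((0:ℕ):ℝ) + p {0, 1, 2} * ((1:ℕ):ℝ) := by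
      rw [symmLoss, sum_finset_fin3]; rfl
    rw [hM, hS]
    simp only [show ({2, 1}:Finset (Fin 3)) = {1, 2} by decide, show ({2, 0}:Finset (Fin 3)) = {0, 2} by decide, show ({1, 0}:Finset (Fin 3)) = {0, 1} by decide]
    push_cast; constructor <;> intro h <;> linarith
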